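/- arXiv:2605.01032 — 3 statements merged into one kernel-verified Lean document; each statement's English description precedes it below -/
import Mathlib

section
/- (bind_within_caps) For any capability sets caps1 and caps2, any tree t : itree E A, and any continuation k : A → itree E B, if within_caps caps1 t and for every r : A within_caps caps2 (k r), then within_caps (cap_union caps1 caps2) (t >>= k). -/
/-- The polynomial functor whose final coalgebra is the type of interaction trees. -/
def ITreePF (E : Type → Type) (R : Type) : PFunctor.{1} :=
  ⟨ULift.{1} R ⊕ (PUnit.{2} ⊕ Σ X : Type, E X),
   fun a =>
     match a with
     | Sum.inl _ => PEmpty.{2}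
     | Sum.inr (Sum.inl _) => PUnit.{2}
     | Sum.inr (Sum.inr p) => ULift.{1} p.1⟩

/-- Interaction trees, defined coinductively as the M-type of `ITreePF`. -/
def ITree (E : Type → Type) (R : Type) : Type 1 := PFunctor.M (ITreePF E R)

namespace ITree

variable {E : Type → Type} {R A B : Type}

/-- Pure value leaf. -/
def Ret (r : R) : ITree E R :=
  PFunctor.M.mk ⟨Sum.inl ⟨r⟩, fun e => e.elim⟩

/-- Silent step. -/
def Tau (t : ITree E R) : ITree E R :=
  PFunctor.M.mk ⟨Sum.inr (Sum.inl PUnit.unit), fun _ => t⟩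

/-- Visible event with continuation. -/
def Vis {X : Type} (e : E X) (k : X → ITree E R) : ITree E R :=
  PFunctor.M.mk ⟨Sum.inr (Sum.inr ⟨X, e⟩), fun x => k x.down⟩

/-- Monadic bind: replace every `Ret r` leaf of `t` by `k r`, by corecursion. -/
def bind (t : ITree E A) (k : A → ITree E B) : ITree E B :=
  PFunctor.M.corec
    (fun s : ITree E A ⊕ ITree E B =>
      match s with
      | Sum.inl t =>
        match PFunctor.M.dest t with
        | ⟨Sum.inl r, _⟩ =>
          let d := PFunctor.M.dest (k r.down)
          ⟨d.1, fun b => Sum.inr (d.2 b)⟩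
        | ⟨Sum.inr (Sum.inl _), f⟩ =>
          ⟨Sum.inr (Sum.inl PUnit.unit), fun b => Sum.inl (f b)⟩
        | ⟨Sum.inr (Sum.inr p), f⟩ =>
          ⟨Sum.inr (Sum.inr p), fun b => Sum.inl (f b)⟩
      | Sum.inr u =>
        let d := PFunctor.M.dest u
        ⟨d.1, fun b => Sum.inr (d.2 b)⟩)
    (Sum.inl t)

end ITree

/-- Capability sets as characteristic functions. -/
def CapSet (Capability : Type) : Type := Capability → Bool

def cap_empty {Capability : Type} : CapSet Capability := fun _ => false

def cap_full {Capability : Type} : CapSet Capability := fun _ => true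

def cap_union {Capability : Type} (s1 s2 : CapSet Capability) : CapSet Capability :=
  fun c => s1 c || s2 c

/-- An event is within `caps` if it needs no capability, or its required capability is in `caps`. -/
def directive_in_caps {E : Type → Type} {Capability : Type}
    (req : ∀ X : Type, E X → Option Capability) (caps : CapSet Capability)
    {X : Type} (e : E X) : Prop :=
  req X e = none ∨ ∃ c, req X e = some c ∧ caps c = true

/-- One step of the `within_caps` generating functor. -/
def withinCapsF {E : Type → Type} {Capability : Type}
    (req : ∀ X : Type, E X → Option Capability) (caps : CapSet Capability)
    {R : Type} (P : ITree E R → Prop) (t : ITree E R) : Prop :=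
  (∃ r, t = ITree.Ret r) ∨
  (∃ t', t = ITree.Tau t' ∧ P t') ∨
  (∃ (X : Type) (e : E X) (k : X → ITree E R),
      t = ITree.Vis e k ∧ directive_in_caps req caps e ∧ ∀ x, P (k x))

/-- `within_caps caps t`: greatest fixed point of `withinCapsF`, i.e. `t` belongs to
some postfixed point of the generating functor. -/
def within_caps {E : Type → Type} {Capability : Type}
    (req : ∀ X : Type, E X → Option Capability) (caps : CapSet Capability)
    {R : Type} (t : ITree E R) : Prop :=
  ∃ P : ITree E R → Prop, (∀ t', P t' → withinCapsF req caps P t') ∧ P t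


namespace ITree

variable {E : Type → Type} {A B : Type}

/-- The step function used in `bind`. -/
def bindF (k : A → ITree E B) (s : ITree E A ⊕ ITree E B) : (ITreePF E B).Obj (ITree E A ⊕ ITree E B) :=
  match s with
  | Sum.inl t =>
    match PFunctor.M.dest t with
    | ⟨Sum.inl r, _⟩ =>
      let d := PFunctor.M.dest (k r.down)
      ⟨d.1, fun b => Sum.inr (d.2 b)⟩
    | ⟨Sum.inr (Sum.inl _), f⟩ =>
      ⟨Sum.inr (Sum.inl PUnit.unit), fun b => Sum.inl (f b)⟩
    | ⟨Sum.inr (Sum.inr p), f⟩ =>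
      ⟨Sum.inr (Sum.inr p), fun b => Sum.inl (f b)⟩
  | Sum.inr u =>
    let d := PFunctor.M.dest u
    ⟨d.1, fun b => Sum.inr (d.2 b)⟩

theorem bind_eq (t : ITree E A) (k : A → ITree E B) :
    ITree.bind t k = PFunctor.M.corec (bindF k) (Sum.inl t) := rfl

theorem copy_eq (k : A → ITree E B) (u : ITree E B) :
    PFunctor.M.corec (bindF k) (Sum.inr u) = u := by
  apply PFunctor.M.bisim (fun x y => x = PFunctor.M.corec (bindF k) (Sum.inr y))
  · intro x y hxy
    subst hxy
    refine ⟨(PFunctor.M.dest y).1, fun b => PFunctor.M.corec (bindF k) (Sum.inr ((PFunctor.M.dest y).2 b)), (PFunctor.M.dest y).2, ?_, rfl, fun i => rfl⟩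
    rw [PFunctor.M.dest_corec]
    rfl
  · rfl

theorem dest_inj {P : PFunctor.{u}} {x y : PFunctor.M P}
    (h : PFunctor.M.dest x = PFunctor.M.dest y) : x = y := by
  rw [← PFunctor.M.mk_dest x, ← PFunctor.M.mk_dest y, h]

theorem bind_ret (r : A) (k : A → ITree E B) :
    ITree.bind (ITree.Ret r) k = k r := by
  apply dest_inj
  rw [bind_eq, PFunctor.M.dest_corec]
  show PFunctor.map _ _ (bindF k (Sum.inl (ITree.Ret r))) = _
  have h : bindF k (Sum.inl (ITree.Ret r)) =
      ⟨(PFunctor.M.dest (k r)).1, fun b => Sum.inr ((PFunctor.M.dest (k r)).2 b)⟩ := by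
    unfold bindF ITree.Ret
    dsimp only
    rw (transparency := .default) [PFunctor.M.dest_mk]
  rw [h]
  show (⟨(PFunctor.M.dest (k r)).1,
      fun b => PFunctor.M.corec (bindF k) (Sum.inr ((PFunctor.M.dest (k r)).2 b))⟩ :
      (ITreePF E B).Obj _) = _
  refine (congrArg (Sigma.mk _) (funext fun b => copy_eq k _)).trans ?_
  rfl

theorem bind_tau (t : ITree E A) (k : A → ITree E B) :
    ITree.bind (ITree.Tau t) k = ITree.Tau (ITree.bind t k) := by
  apply dest_inj
  rw [bind_eq, PFunctor.M.dest_corec]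
  have h : bindF k (Sum.inl (ITree.Tau t)) =
      ⟨Sum.inr (Sum.inl PUnit.unit), fun _ => Sum.inl t⟩ := by
    unfold bindF ITree.Tau
    dsimp only
    rw (transparency := .default) [PFunctor.M.dest_mk]
  rw [h]
  show (⟨Sum.inr (Sum.inl PUnit.unit),
      fun _ => PFunctor.M.corec (bindF k) (Sum.inl t)⟩ : (ITreePF E B).Obj _) = _
  unfold ITree.Tau
  rw (transparency := .default) [PFunctor.M.dest_mk]
  rfl

theorem bind_vis {X : Type} (e : E X) (f : X → ITree E A) (k : A → ITree E B) :
    ITree.bind (ITree.Vis e f) k = ITree.Vis e (fun x => ITree.bind (f x) k) := by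
  apply dest_inj
  rw [bind_eq, PFunctor.M.dest_corec]
  have h : bindF k (Sum.inl (ITree.Vis e f)) =
      ⟨Sum.inr (Sum.inr ⟨X, e⟩), fun x => Sum.inl (f x.down)⟩ := by
    unfold bindF ITree.Vis
    dsimp only
    rw (transparency := .default) [PFunctor.M.dest_mk]
  rw [h]
  show (⟨Sum.inr (Sum.inr ⟨X, e⟩),
      fun x : ULift X => PFunctor.M.corec (bindF k) (Sum.inl (f x.down))⟩ :
      (ITreePF E B).Obj _) = _
  unfold ITree.Vis
  rw (transparency := .default) [PFunctor.M.dest_mk]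
  rfl

end ITree

theorem within_caps_dest {E : Type → Type} {Capability : Type}
    (req : ∀ X : Type, E X → Option Capability) (caps : CapSet Capability)
    {R : Type} {t : ITree E R} (h : within_caps req caps t) :
    withinCapsF req caps (within_caps req caps) t := by
  obtain ⟨P, hP, hPt⟩ := h
  have := hP t hPt
  rcases this with ⟨r, hr⟩ | ⟨t', ht', hPt'⟩ | ⟨X, e, k, hv, hd, hk⟩
  · exact Or.inl ⟨r, hr⟩
  · exact Or.inr (Or.inl ⟨t', ht', ⟨P, hP, hPt'⟩⟩)
  · exact Or.inr (Or.inr ⟨X, e, k, hv, hd, fun x => ⟨P, hP, hk x⟩⟩)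

/-- bind_within_caps: capability bounds compose under monadic bind. -/
theorem bind_within_caps {E : Type → Type} {Capability : Type}
    (req : ∀ X : Type, E X → Option Capability)
    {A B : Type} (caps1 caps2 : CapSet Capability)
    (t : ITree E A) (k : A → ITree E B)
    (ht : within_caps req caps1 t)
    (hk : ∀ r : A, within_caps req caps2 (k r)) :
    within_caps req (cap_union caps1 caps2) (ITree.bind t k) := by
  classical
  refine ⟨fun u => (∃ t0, within_caps req caps1 t0 ∧ u = ITree.bind t0 k) ∨
      within_caps req caps2 u, ?_, Or.inl ⟨t, ht, rfl⟩⟩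
  rintro u (⟨t0, ht0, rfl⟩ | hu)
  · rcases within_caps_dest req caps1 ht0 with ⟨r, hr⟩ | ⟨t', ht', hw⟩ | ⟨X, e, f, hv, hd, hf⟩
    · subst hr
      rw [ITree.bind_ret]
      have hk' := within_caps_dest req caps2 (hk r)
      rcases hk' with ⟨s, hs⟩ | ⟨t', ht', hw⟩ | ⟨X, e, f, hv, hd, hf⟩
      · exact Or.inl ⟨s, hs⟩
      · exact Or.inr (Or.inl ⟨t', ht', Or.inr hw⟩)
      · refine Or.inr (Or.inr ⟨X, e, f, hv, ?_, fun x => Or.inr (hf x)⟩)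
        rcases hd with h | ⟨c, hc, hcc⟩
        · exact Or.inl h
        · exact Or.inr ⟨c, hc, by simp [cap_union, hcc]⟩
    · subst ht'
      rw [ITree.bind_tau]
      exact Or.inr (Or.inl ⟨_, rfl, Or.inl ⟨t', hw, rfl⟩⟩)
    · subst hv
      rw [ITree.bind_vis]
      refine Or.inr (Or.inr ⟨X, e, _, rfl, ?_, fun x => Or.inl ⟨f x, hf x, rfl⟩⟩)
      rcases hd with h | ⟨c, hc, hcc⟩
      · exact Or.inl h
      · exact Or.inr ⟨c, hc, by simp [cap_union, hcc]⟩
  · rcases within_caps_dest req caps2 hu with ⟨s, hs⟩ | ⟨t', ht', hw⟩ | ⟨X, e, f, hv, hd, hf⟩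
    · exact Or.inl ⟨s, hs⟩
    · exact Or.inr (Or.inl ⟨t', ht', Or.inr hw⟩)
    · refine Or.inr (Or.inr ⟨X, e, f, hv, ?_, fun x => Or.inr (hf x)⟩)
      rcases hd with h | ⟨c, hc, hcc⟩
      · exact Or.inl h
      · exact Or.inr ⟨c, hc, by simp [cap_union, hcc]⟩
end

section
/- (seq_comp_caps) For Kleisli morphisms f : A → itree E B and g : B → itree E C and capability sets caps1, caps2: if for a given a : A one has within_caps caps1 (f a), and for every b : B one has within_caps caps2 (g b), then within_caps (cap_union caps1 caps2) ((f >=> g) a), where (f >=> g) a := f a >>= g. -/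
/-- Kleisli composition of morphisms into interaction trees. -/
def kcomp {E : Type → Type} {A B C : Type}
    (f : A → ITree E B) (g : B → ITree E C) : A → ITree E C :=
  fun a => ITree.bind (f a) g

namespace ITreeAux

variable {E : Type → Type} {A B R : Type}

/-- The corecursion functional used in `ITree.bind`. -/
def F (k : A → ITree E B) : ITree E A ⊕ ITree E B → (ITreePF E B).Obj (ITree E A ⊕ ITree E B) :=
  fun s =>
      match s with
      | Sum.inl t =>
        match PFunctor.M.dest t with
        | ⟨Sum.inl r, _⟩ =>
          let d := PFunctor.M.dest (k r.down)
          ⟨d.1, fun b => Sum.inr (d.2 b)⟩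
        | ⟨Sum.inr (Sum.inl _), f⟩ =>
          ⟨Sum.inr (Sum.inl PUnit.unit), fun b => Sum.inl (f b)⟩
        | ⟨Sum.inr (Sum.inr p), f⟩ =>
          ⟨Sum.inr (Sum.inr p), fun b => Sum.inl (f b)⟩
      | Sum.inr u =>
        let d := PFunctor.M.dest u
        ⟨d.1, fun b => Sum.inr (d.2 b)⟩

lemma bind_eq (t : ITree E A) (k : A → ITree E B) :
    ITree.bind t k = PFunctor.M.corec (F k) (Sum.inl t) := rfl

lemma corec_inr (k : A → ITree E B) (u : ITree E B) :
    PFunctor.M.corec (F k) (Sum.inr u) = u := by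
  apply PFunctor.M.bisim (fun x y => x = PFunctor.M.corec (F k) (Sum.inr y))
  · intro x y h
    refine ⟨(PFunctor.M.dest y).1,
      fun b => PFunctor.M.corec (F k) (Sum.inr ((PFunctor.M.dest y).2 b)),
      (PFunctor.M.dest y).2, ?_, rfl, fun i => rfl⟩
    rw [h, PFunctor.M.dest_corec]
    rfl
  · rfl

lemma bind_Ret (r : A) (k : A → ITree E B) : ITree.bind (ITree.Ret r) k = k r := by
  rw [bind_eq]
  conv_rhs => rw [← PFunctor.M.mk_dest (k r)]
  rw [← PFunctor.M.mk_dest (PFunctor.M.corec (F k) (Sum.inl (ITree.Ret r)))]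
  congr 1
  rw [PFunctor.M.dest_corec]
  show PFunctor.map _ _ (F k (Sum.inl (ITree.Ret r))) = _
  have : F k (Sum.inl (ITree.Ret r)) =
      ⟨(PFunctor.M.dest (k r)).1, fun b => Sum.inr ((PFunctor.M.dest (k r)).2 b)⟩ := rfl
  rw [this]
  refine Sigma.ext rfl (heq_of_eq ?_)
  funext b
  exact corec_inr k _

lemma bind_Tau (t : ITree E A) (k : A → ITree E B) :
    ITree.bind (ITree.Tau t) k = ITree.Tau (ITree.bind t k) := by
  rw [bind_eq]
  rw [← PFunctor.M.mk_dest (PFunctor.M.corec (F k) (Sum.inl (ITree.Tau t)))]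
  rw [PFunctor.M.dest_corec]
  rfl

lemma bind_Vis {X : Type} (e : E X) (h : X → ITree E A) (k : A → ITree E B) :
    ITree.bind (ITree.Vis e h) k = ITree.Vis e (fun x => ITree.bind (h x) k) := by
  rw [bind_eq]
  rw [← PFunctor.M.mk_dest (PFunctor.M.corec (F k) (Sum.inl (ITree.Vis e h)))]
  rw [PFunctor.M.dest_corec]
  rfl

lemma cases (t : ITree E R) :
    (∃ r, t = ITree.Ret r) ∨ (∃ t', t = ITree.Tau t') ∨
      (∃ (X : Type) (e : E X) (k : X → ITree E R), t = ITree.Vis e k) := by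
  rcases hd : PFunctor.M.dest t with ⟨a, f⟩
  have ht : t = PFunctor.M.mk ⟨a, f⟩ := by rw [← hd]; exact (PFunctor.M.mk_dest t).symm
  rcases a with ⟨r⟩ | u | ⟨X, e⟩
  · refine Or.inl ⟨r.down, ?_⟩
    rw [ht, ITree.Ret]
    congr 1
    refine Sigma.ext rfl (heq_of_eq ?_)
    funext x; cases x
  · cases u
    refine Or.inr (Or.inl ⟨f PUnit.unit, ?_⟩)
    rw [ht]; delta ITree.Tau
    congr 1
  · refine Or.inr (Or.inr ⟨X, e, fun x => f ⟨x⟩, ?_⟩)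
    rw [ht]
    rfl

lemma within_caps_dest {Capability : Type} (req : ∀ X : Type, E X → Option Capability)
    (caps : CapSet Capability) {t : ITree E R} (h : within_caps req caps t) :
    withinCapsF req caps (within_caps req caps) t := by
  obtain ⟨Q, hQ, hQt⟩ := h
  rcases hQ t hQt with ⟨r, hr⟩ | ⟨t', ht', hP⟩ | ⟨X, e, k, hv, hd, hk⟩
  · exact Or.inl ⟨r, hr⟩
  · exact Or.inr (Or.inl ⟨t', ht', ⟨Q, hQ, hP⟩⟩)
  · exact Or.inr (Or.inr ⟨X, e, k, hv, hd, fun x => ⟨Q, hQ, hk x⟩⟩)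

lemma withinCapsF_mono {Capability : Type} (req : ∀ X : Type, E X → Option Capability)
    {caps caps' : CapSet Capability} {P P' : ITree E R → Prop}
    (hc : ∀ c, caps c = true → caps' c = true) (hP : ∀ s, P s → P' s) {t : ITree E R}
    (h : withinCapsF req caps P t) : withinCapsF req caps' P' t := by
  rcases h with ⟨r, hr⟩ | ⟨t', ht', hp⟩ | ⟨X, e, k, hv, hd, hk⟩
  · exact Or.inl ⟨r, hr⟩
  · exact Or.inr (Or.inl ⟨t', ht', hP _ hp⟩)
  · refine Or.inr (Or.inr ⟨X, e, k, hv, ?_, fun x => hP _ (hk x)⟩)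
    rcases hd with hn | ⟨c, hc', hcc⟩
    · exact Or.inl hn
    · exact Or.inr ⟨c, hc', hc c hcc⟩

end ITreeAux

/-- seq_comp_caps: sequential composition is within the union of capability sets. -/
theorem seq_comp_caps {E : Type → Type} {Capability : Type}
    (req : ∀ X : Type, E X → Option Capability)
    {A B C : Type} (caps1 caps2 : CapSet Capability)
    (f : A → ITree E B) (g : B → ITree E C) (a : A)
    (hf : within_caps req caps1 (f a))
    (hg : ∀ b : B, within_caps req caps2 (g b)) :
    within_caps req (cap_union caps1 caps2) (kcomp f g a) := by
  set P : ITree E C → Prop := fun t =>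
    (∃ u, within_caps req caps1 u ∧ t = ITree.bind u g) ∨ within_caps req caps2 t with hP
  have h1 : ∀ c, caps1 c = true → cap_union caps1 caps2 c = true := by
    intro c h; simp [cap_union, h]
  have h2 : ∀ c, caps2 c = true → cap_union caps1 caps2 c = true := by
    intro c h; simp [cap_union, h]
  refine ⟨P, ?_, Or.inl ⟨f a, hf, rfl⟩⟩
  intro t ht
  rcases ht with ⟨u, hu, rfl⟩ | h2t
  · rcases ITreeAux.within_caps_dest req caps1 hu with
      ⟨r, rfl⟩ | ⟨u', rfl, hu'⟩ | ⟨X, e, k, rfl, hd, hk⟩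
    · rw [ITreeAux.bind_Ret]
      exact ITreeAux.withinCapsF_mono req h2 (fun s hs => Or.inr hs)
        (ITreeAux.within_caps_dest req caps2 (hg r))
    · rw [ITreeAux.bind_Tau]
      exact Or.inr (Or.inl ⟨_, rfl, Or.inl ⟨u', hu', rfl⟩⟩)
    · rw [ITreeAux.bind_Vis]
      refine Or.inr (Or.inr ⟨X, e, _, rfl, ?_, fun x => Or.inl ⟨k x, hk x, rfl⟩⟩)
      rcases hd with hn | ⟨c, hc', hcc⟩
      · exact Or.inl hn
      · exact Or.inr ⟨c, hc', h1 c hcc⟩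
  · exact ITreeAux.withinCapsF_mono req h2 (fun s hs => Or.inr hs)
      (ITreeAux.within_caps_dest req caps2 h2t)
end

section
/- (tensor_within_caps) For Kleisli morphisms f : A → itree E B and g : C → itree E D, capability sets caps1, caps2, and inputs a : A, c : C: if within_caps caps1 (f a) and within_caps caps2 (g c), then within_caps (cap_union caps1 caps2) ((f ⊗ g) (a, c)), where (f ⊗ g) (a, c) := f a >>= fun b => g c >>= fun d => Ret (b, d). -/
/-- Tensor product of Kleisli morphisms into interaction trees. -/
def ktensor {E : Type → Type} {A B C D : Type}
    (f : A → ITree E B) (g : C → ITree E D) : A × C → ITree E (B × D) :=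
  fun p => ITree.bind (f p.1) (fun b => ITree.bind (g p.2) (fun d => ITree.Ret (b, d)))

section Aux

variable {E : Type → Type} {A B : Type}

/-- The corecursion step function used in `ITree.bind`, named for reasoning. -/
def bindStep (k : A → ITree E B) :
    ITree E A ⊕ ITree E B → (ITreePF E B) (ITree E A ⊕ ITree E B) :=
  fun s =>
    match s with
    | Sum.inl t =>
      match PFunctor.M.dest t with
      | ⟨Sum.inl r, _⟩ =>
        let d := PFunctor.M.dest (k r.down)
        ⟨d.1, fun b => Sum.inr (d.2 b)⟩
      | ⟨Sum.inr (Sum.inl _), f⟩ =>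
        ⟨Sum.inr (Sum.inl PUnit.unit), fun b => Sum.inl (f b)⟩
      | ⟨Sum.inr (Sum.inr p), f⟩ =>
        ⟨Sum.inr (Sum.inr p), fun b => Sum.inl (f b)⟩
    | Sum.inr u =>
      let d := PFunctor.M.dest u
      ⟨d.1, fun b => Sum.inr (d.2 b)⟩

lemma bind_eq (t : ITree E A) (k : A → ITree E B) :
    ITree.bind t k = PFunctor.M.corec (bindStep k) (Sum.inl t) := rfl

lemma dest_inj {P : PFunctor.{1}} {x y : PFunctor.M P}
    (h : PFunctor.M.dest x = PFunctor.M.dest y) : x = y := by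
  rw [← PFunctor.M.mk_dest x, ← PFunctor.M.mk_dest y, h]

lemma corec_inr (k : A → ITree E B) (u : ITree E B) :
    PFunctor.M.corec (bindStep k) (Sum.inr u) = u := by
  refine PFunctor.M.bisim
    (fun x y => x = PFunctor.M.corec (bindStep k) (Sum.inr y))
    ?_ _ _ rfl
  rintro x y rfl
  refine ⟨(PFunctor.M.dest y).1,
    fun b => PFunctor.M.corec (bindStep k) (Sum.inr ((PFunctor.M.dest y).2 b)),
    (PFunctor.M.dest y).2, ?_, rfl, fun i => rfl⟩
  rw [PFunctor.M.dest_corec]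
  rfl

lemma bind_ret (r : A) (k : A → ITree E B) :
    ITree.bind (ITree.Ret r) k = k r := by
  apply dest_inj
  rw [bind_eq, PFunctor.M.dest_corec]
  show (⟨(PFunctor.M.dest (k r)).1,
      fun b => PFunctor.M.corec (bindStep k) (Sum.inr ((PFunctor.M.dest (k r)).2 b))⟩ :
      (ITreePF E B) (ITree E B)) = PFunctor.M.dest (k r)
  conv_rhs => rw [show PFunctor.M.dest (k r) =
    ⟨(PFunctor.M.dest (k r)).1, (PFunctor.M.dest (k r)).2⟩ from rfl]
  congr 1
  funext b
  exact corec_inr k _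

lemma bind_tau (t : ITree E A) (k : A → ITree E B) :
    ITree.bind (ITree.Tau t) k = ITree.Tau (ITree.bind t k) := by
  apply dest_inj
  rw [bind_eq, PFunctor.M.dest_corec]
  rfl

lemma bind_vis {X : Type} (e : E X) (h : X → ITree E A) (k : A → ITree E B) :
    ITree.bind (ITree.Vis e h) k = ITree.Vis e (fun x => ITree.bind (h x) k) := by
  apply dest_inj
  rw [bind_eq, PFunctor.M.dest_corec]
  rfl

variable {Capability : Type} (req : ∀ X : Type, E X → Option Capability)

lemma withinCapsF_mono {caps : CapSet Capability} {R : Type}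
    {P Q : ITree E R → Prop} (h : ∀ t, P t → Q t) {t : ITree E R} :
    withinCapsF req caps P t → withinCapsF req caps Q t := by
  rintro (⟨r, rfl⟩ | ⟨t', rfl, ht'⟩ | ⟨X, e, k, rfl, he, hk⟩)
  · exact Or.inl ⟨r, rfl⟩
  · exact Or.inr (Or.inl ⟨t', rfl, h _ ht'⟩)
  · exact Or.inr (Or.inr ⟨X, e, k, rfl, he, fun x => h _ (hk x)⟩)

lemma within_caps_unfold {caps : CapSet Capability} {R : Type} {t : ITree E R}
    (h : within_caps req caps t) : withinCapsF req caps (within_caps req caps) t := by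
  obtain ⟨P, hP, ht⟩ := h
  exact withinCapsF_mono req (fun t' ht' => ⟨P, hP, ht'⟩) (hP t ht)

lemma within_caps_mono {caps caps' : CapSet Capability}
    (hsub : ∀ c, caps c = true → caps' c = true) {R : Type} {t : ITree E R}
    (h : within_caps req caps t) : within_caps req caps' t := by
  refine ⟨within_caps req caps, ?_, h⟩
  intro t' ht'
  rcases within_caps_unfold req ht' with ⟨r, rfl⟩ | ⟨u, rfl, hu⟩ | ⟨X, e, k, rfl, he, hk⟩
  · exact Or.inl ⟨r, rfl⟩
  · exact Or.inr (Or.inl ⟨u, rfl, hu⟩)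
  · refine Or.inr (Or.inr ⟨X, e, k, rfl, ?_, hk⟩)
    rcases he with h0 | ⟨c, hc, hc'⟩
    · exact Or.inl h0
    · exact Or.inr ⟨c, hc, hsub c hc'⟩

lemma within_caps_ret {caps : CapSet Capability} {R : Type} (r : R) :
    within_caps req caps (ITree.Ret r : ITree E R) :=
  ⟨fun t => ∃ x, t = ITree.Ret x, fun _ ht => Or.inl ht, ⟨r, rfl⟩⟩

lemma within_caps_bind {caps : CapSet Capability}
    {t : ITree E A} {k : A → ITree E B}
    (ht : within_caps req caps t) (hk : ∀ r, within_caps req caps (k r)) :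
    within_caps req caps (ITree.bind t k) := by
  refine ⟨fun x => (∃ u, within_caps req caps u ∧ x = ITree.bind u k) ∨
    within_caps req caps x, ?_, Or.inl ⟨t, ht, rfl⟩⟩
  rintro x (⟨u, hu, rfl⟩ | hx)
  · rcases within_caps_unfold req hu with ⟨r, rfl⟩ | ⟨u', rfl, hu'⟩ | ⟨X, e, h, rfl, he, hh⟩
    · rw [bind_ret]
      exact withinCapsF_mono req (fun _ h => Or.inr h) (within_caps_unfold req (hk r))
    · rw [bind_tau]
      exact Or.inr (Or.inl ⟨_, rfl, Or.inl ⟨u', hu', rfl⟩⟩)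
    · rw [bind_vis]
      exact Or.inr (Or.inr ⟨X, e, _, rfl, he, fun x => Or.inl ⟨h x, hh x, rfl⟩⟩)
  · exact withinCapsF_mono req (fun _ h => Or.inr h) (within_caps_unfold req hx)

end Aux

/-- tensor_within_caps: the tensor product is within the union of capability sets. -/
theorem tensor_within_caps {E : Type → Type} {Capability : Type}
    (req : ∀ X : Type, E X → Option Capability)
    {A B C D : Type} (caps1 caps2 : CapSet Capability)
    (f : A → ITree E B) (g : C → ITree E D) (a : A) (c : C)
    (hf : within_caps req caps1 (f a))
    (hg : within_caps req caps2 (g c)) :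
    within_caps req (cap_union caps1 caps2) (ktensor f g (a, c)) := by
  have hf' : within_caps req (cap_union caps1 caps2) (f a) :=
    within_caps_mono req (fun c h => by simp [cap_union, h]) hf
  have hg' : within_caps req (cap_union caps1 caps2) (g c) :=
    within_caps_mono req (fun c h => by simp [cap_union, h]) hg
  exact within_caps_bind req hf' (fun b =>
    within_caps_bind req hg' (fun d => within_caps_ret req _))
end
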